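/- Let τ = (τ_n : A_{n+1}* → A_n*)_{n≥0} be a constant-length directive sequence with |A_{n+1}| = 2 for every n ≥ 0, and suppose X_τ is aperiodic. For n ≥ 0 let p_n = |τ_{[0,n+1)}(a)| (which is independent of a ∈ A_{n+1}). Then for every x ∈ X_τ and every n ≥ 0 there exists an integer t with 0 ≤ t < p_n such that (p_n, t) is a strong rank-2 cut of x and { x[t+k p_n, t+(k+1) p_n) : k ∈ ℤ } = { τ_{[0,n+1)}(a) : a ∈ A_{n+1} }. -/

import Mathlib

namespace ToeplitzFR

open Set

variable {A B C : Type*}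

/-- The shift map `S` on `ℤ → A`: `S(x)(i) = x(i+1)`. -/
def shift (x : ℤ → A) : ℤ → A := fun i => x (i + 1)

/-- The inverse shift map `S⁻¹`. -/
def shiftInv (x : ℤ → A) : ℤ → A := fun i => x (i - 1)

/-- The shift by `k`: `S^k`. -/
def shiftBy (k : ℤ) (x : ℤ → A) : ℤ → A := fun i => x (i + k)

/-- The finite word `x[i, i+n)`. -/
def factorAt (x : ℤ → A) (i : ℤ) (n : ℕ) : List A :=
  (List.range n).map fun j => x (i + j)

/-- `x` is a periodic point of the shift. -/
def IsPeriodicPoint (x : ℤ → A) : Prop := ∃ p : ℕ, 0 < p ∧ ∀ i : ℤ, x (i + p) = x i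

def IsAperiodicPoint (x : ℤ → A) : Prop := ¬ IsPeriodicPoint x

/-- `Per_p(x)`. -/
def PerSet (x : ℤ → A) (p : ℕ) : Set ℤ := {i : ℤ | ∀ k : ℤ, x (i + k * p) = x i}

/-- `Per(x) = ⋃_{p>1} Per_p(x)`. -/
def PerAll (x : ℤ → A) : Set ℤ := {i : ℤ | ∃ p : ℕ, 1 < p ∧ i ∈ PerSet x p}

/-- `x` is a Toeplitz sequence. -/
def IsToeplitz (x : ℤ → A) : Prop := ∀ i : ℤ, ∃ p : ℕ, 1 < p ∧ i ∈ PerSet x p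

/-- The shift orbit of `x`. -/
def orbit (x : ℤ → A) : Set (ℤ → A) := {y | ∃ k : ℤ, y = shiftBy k x}

/-- `X` is the Toeplitz subshift generated by the Toeplitz sequence `x`. -/
def ToeplitzGenerates [TopologicalSpace A] (x : ℤ → A) (X : Set (ℤ → A)) : Prop :=
  IsToeplitz x ∧ X = closure (orbit x)

/-- `X` is a Toeplitz subshift. -/
def IsToeplitzSubshift [TopologicalSpace A] (X : Set (ℤ → A)) : Prop :=
  ∃ x : ℤ → A, ToeplitzGenerates x X

/-- The `p`-skeleton of `x`, with `none` as the blank symbol. -/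
noncomputable def Skel (x : ℤ → A) (p : ℕ) : ℤ → Option A :=
  fun i => @ite _ (i ∈ PerSet x p) (Classical.dec _) (some (x i)) none

/-- `p` is an essential period of `x`. -/
def IsEssentialPeriod (x : ℤ → A) (p : ℕ) : Prop :=
  1 < p ∧ ∀ q : ℕ, 0 < q → q < p → ∃ i : ℤ, Skel x p (i + q) ≠ Skel x p i

/-- `(P n)` is a period structure for `x`. -/
def IsPeriodStructure (x : ℤ → A) (P : ℕ → ℕ) : Prop :=
  StrictMono P ∧ (∀ n, IsEssentialPeriod x (P n)) ∧ (∀ n, P n ∣ P (n+1)) ∧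
    ∀ i : ℤ, ∃ n, i ∈ PerSet x (P n)

/-- `q` divides the scale of the Toeplitz subshift `X`. -/
def DividesScale [TopologicalSpace A] (X : Set (ℤ → A)) (q : ℕ) : Prop :=
  ∃ (x : ℤ → A) (P : ℕ → ℕ),
    ToeplitzGenerates x X ∧ IsPeriodStructure x P ∧ ∃ n, q ∣ P n

/-! ### Directive sequences and S-adic subshifts -/

/-- All morphisms in the directive sequence are non-erasing. -/
def NonErasing {A : ℕ → Type*} (τ : ∀ n, A (n+1) → List (A n)) : Prop :=
  ∀ n a, τ n a ≠ []

/-- The directive sequence has constant length. -/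
def ConstantLength {A : ℕ → Type*} (τ : ∀ n, A (n+1) → List (A n)) : Prop :=
  ∀ n, ∀ a b : A (n+1), (τ n a).length = (τ n b).length

/-- The directive sequence is proper. -/
def ProperSeq {A : ℕ → Type*} (τ : ∀ n, A (n+1) → List (A n)) : Prop :=
  ∀ n, ∃ b c : A n, ∀ a : A (n+1), (τ n a).head? = some b ∧ (τ n a).getLast? = some c

/-- `sadicWordAux τ n k a = τ_{[n, n+k)}(a)`. -/
def sadicWordAux {A : ℕ → Type*} (τ : ∀ n, A (n+1) → List (A n)) (n : ℕ) :
    ∀ k : ℕ, A (n + k) → List (A n)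
  | 0, a => [a]
  | (k+1), a => (τ (n+k) a).flatMap (sadicWordAux τ n k)

/-- `word0 τ k a = τ_{[0, k)}(a)` for `a ∈ A k`. -/
def word0 {A : ℕ → Type*} (τ : ∀ n, A (n+1) → List (A n)) :
    ∀ k : ℕ, A k → List (A 0)
  | 0, a => [a]
  | (k+1), a => (τ k a).flatMap (word0 τ k)

/-- The directive sequence is primitive. -/
def PrimitiveSeq {A : ℕ → Type*} (τ : ∀ n, A (n+1) → List (A n)) : Prop :=
  ∀ n, ∃ k : ℕ, 0 < k ∧ ∀ (a : A (n+k)) (b : A n), b ∈ sadicWordAux τ n k a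

/-- The `n`-th level `X_τ^{(n)}` of the S-adic system generated by `τ`. -/
def XLevel {A : ℕ → Type*} (τ : ∀ n, A (n+1) → List (A n)) (n : ℕ) :
    Set (ℤ → A n) :=
  {y | ∀ (i : ℤ) (m : ℕ), ∃ k : ℕ, 0 < k ∧ ∃ a : A (n+k),
      (factorAt y i m).IsInfix (sadicWordAux τ n k a)}

/-- The alphabet rank (`liminf_n |A_n|`) is at most `K`. -/
def AlphabetRankLE (A : ℕ → Type*) [∀ n, Fintype (A n)] (K : ℕ) : Prop :=
  ∀ N : ℕ, ∃ n, N ≤ n ∧ Fintype.card (A n) ≤ K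

/-! ### Recognizability -/

/-- `z` is the bi-infinite concatenation `⋯σ(y(-1)).σ(y(0))σ(y(1))⋯`,
with `σ(y(0))` starting at coordinate `0`. -/
def IsConcat (σ : B → List C) (y : ℤ → B) (z : ℤ → C) : Prop :=
  ∃ c : ℤ → ℤ, c 0 = 0 ∧ (∀ j : ℤ, c (j + 1) = c j + (σ (y j)).length) ∧
    ∀ (j : ℤ) (m : Fin (σ (y j)).length), z (c j + (m : ℕ)) = (σ (y j)).get m

/-- `(y, k)` is a centered `σ`-representation of `x` in `Y`. -/
def IsCenteredRep (σ : B → List C) (Y : Set (ℤ → B)) (x : ℤ → C)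
    (y : ℤ → B) (k : ℕ) : Prop :=
  y ∈ Y ∧ k < (σ (y 0)).length ∧ IsConcat σ y (fun m => x (m - k))

/-- The morphism `σ` is recognizable in `Y`. -/
def RecognizableIn (σ : B → List C) (Y : Set (ℤ → B)) : Prop :=
  ∀ (x : ℤ → C) (y y' : ℤ → B) (k k' : ℕ),
    IsCenteredRep σ Y x y k → IsCenteredRep σ Y x y' k' → y = y' ∧ k = k'

/-- The directive sequence `τ` is recognizable. -/
def RecognizableSeq {A : ℕ → Type*} (τ : ∀ n, A (n+1) → List (A n)) : Prop :=
  ∀ n, RecognizableIn (τ n) (XLevel τ (n+1))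

/-! ### Conjugacy -/

/-- `(X, TX)` and `(Y, TY)` are conjugate via a homeomorphism. -/
def ConjugateBy [TopologicalSpace A] [TopologicalSpace B]
    (X : Set (ℤ → A)) (Y : Set (ℤ → B))
    (TX : (ℤ → A) → (ℤ → A)) (TY : (ℤ → B) → (ℤ → B)) : Prop :=
  ∃ φ : ↥X ≃ₜ ↥Y, ∀ (x : ℤ → A) (hx : x ∈ X) (hx' : TX x ∈ X),
    (φ ⟨TX x, hx'⟩).1 = TY (φ ⟨x, hx⟩).1

/-- `(X, S)` and `(Y, S)` are conjugate subshifts. -/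
def Conjugate [TopologicalSpace A] [TopologicalSpace B]
    (X : Set (ℤ → A)) (Y : Set (ℤ → B)) : Prop :=
  ConjugateBy X Y shift shift

/-- `X` is a strong Toeplitz subshift of rank `K`: it is conjugate to the S-adic subshift
of a constant-length, primitive, proper and recognizable directive sequence of
alphabet rank at most `K`. -/
def IsStrongToeplitzOfRank [TopologicalSpace A] (X : Set (ℤ → A)) (K : ℕ) : Prop :=
  ∃ (B : ℕ → Type) (iB : ∀ n, Fintype (B n)) (σ : ∀ n, B (n+1) → List (B n)),
    NonErasing σ ∧ ConstantLength σ ∧ PrimitiveSeq σ ∧ ProperSeq σ ∧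
    RecognizableSeq σ ∧ @AlphabetRankLE B iB K ∧
    @Conjugate A (B 0) _ ⊥ X (XLevel σ 0)

/-- `X` is conjugate to the S-adic subshift of a primitive, proper and recognizable
directive sequence of alphabet rank at most `K`. -/
def HasFiniteRankSAdicRep [TopologicalSpace A] (X : Set (ℤ → A)) (K : ℕ) : Prop :=
  ∃ (B : ℕ → Type) (iB : ∀ n, Fintype (B n)) (σ : ∀ n, B (n+1) → List (B n)),
    NonErasing σ ∧ PrimitiveSeq σ ∧ ProperSeq σ ∧
    RecognizableSeq σ ∧ @AlphabetRankLE B iB K ∧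
    @Conjugate A (B 0) _ ⊥ X (XLevel σ 0)

/-! ### Cuts, languages, built-from -/

/-- The set of words `{x[t+kp, t+(k+1)p) : k ∈ ℤ}`. -/
def cutWords (x : ℤ → A) (p t : ℕ) : Set (List A) :=
  {w | ∃ k : ℤ, w = factorAt x ((t : ℤ) + k * p) p}

/-- `(p, t)` is a strong rank-2 cut of `x`. -/
def StrongRank2Cut (x : ℤ → A) (p t : ℕ) : Prop :=
  t < p ∧ ∃ u v : List A, u ≠ v ∧ cutWords x p t = {u, v}

/-- The language `L_n(X)`. -/
def Lang (n : ℕ) (X : Set (ℤ → A)) : Set (List A) :=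
  {w | ∃ x ∈ X, ∃ i : ℤ, w = factorAt x i n}

/-- The maximal common prefix of `u` and `v` has length greater than `m`. -/
def CommonPrefixLongerThan (u v : List A) (m : ℕ) : Prop :=
  m + 1 ≤ u.length ∧ m + 1 ≤ v.length ∧ u.take (m+1) = v.take (m+1)

/-- The maximal common suffix of `u` and `v` has length greater than `m`. -/
def CommonSuffixLongerThan (u v : List A) (m : ℕ) : Prop :=
  CommonPrefixLongerThan u.reverse v.reverse m

/-- `b = (β₀, (α₁, …, α_k), β₁)` is a building of the word `w` from `W`:
`w = β₀α₁⋯α_kβ₁`, all `αᵢ ∈ W`, `β₀` is a proper suffix of an element of `W`,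
and `β₁` is a proper prefix of an element of `W`. -/
def IsBuilding (W : Set (List A)) (w : List A)
    (b : List A × List (List A) × List A) : Prop :=
  w = b.1 ++ b.2.1.flatten ++ b.2.2 ∧ (∀ α ∈ b.2.1, α ∈ W) ∧
  (∃ u ∈ W, b.1 <:+ u ∧ b.1 ≠ u) ∧ (∃ u ∈ W, b.2.2 <+: u ∧ b.2.2 ≠ u)

/-- `w` is uniquely built from `W`. -/
def UniquelyBuiltFrom (W : Set (List A)) (w : List A) : Prop :=
  ∃! b : List A × List (List A) × List A, IsBuilding W w b

/-- `X` together with one of its points satisfies the strong rank-2 cut property. -/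
def GoodCuts [TopologicalSpace A] (X : Set (ℤ → A)) (x : ℤ → A) : Prop :=
  ∀ p : ℕ, 0 < p → DividesScale X p → ∀ m : ℕ,
    ∃ q t : ℕ, StrongRank2Cut x q t ∧ p ∣ q ∧ DividesScale X q ∧
      ∃ u v : List A, u ≠ v ∧ cutWords x q t = {u, v} ∧
        CommonPrefixLongerThan u v m ∧ CommonSuffixLongerThan u v m

/-! ### Euclidean pairs and buildings of bi-infinite sequences -/

/-- `{u, v}` is a Euclidean pair. -/
def EuclideanPair (u v : List A) : Prop :=
  ∃ (w : List A) (k l : ℕ),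
    u = (List.replicate k w).flatten ∧ v = (List.replicate l w).flatten

/-- `α` is the distinguished prefix of `u` and `v`. -/
def IsDistinguishedPrefix (u v α : List A) : Prop :=
  α.length < u.length + v.length ∧
  ∀ x y : List A,
    (∃ l : List (List A), (∀ w ∈ l, w = u ∨ w = v) ∧ x = u ++ l.flatten) →
    (∃ l : List (List A), (∀ w ∈ l, w = u ∨ w = v) ∧ y = v ++ l.flatten) →
    α.length + 1 ≤ x.length → α.length + 1 ≤ y.length →
    α <+: x ∧ α <+: y ∧ x[α.length]? ≠ y[α.length]?

/-- `β` is the distinguished suffix of `u` and `v`. -/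
def IsDistinguishedSuffix (u v β : List A) : Prop :=
  IsDistinguishedPrefix u.reverse v.reverse β.reverse

/-- `(c, f)` is a building of the bi-infinite sequence `x` from `W`:
block `j` starts at position `c j` and carries the word `f j ∈ W`. -/
def IsBuildingSeq (W : Set (List A)) (x : ℤ → A) (c : ℤ → ℤ) (f : ℤ → List A) : Prop :=
  (∀ j : ℤ, f j ∈ W) ∧ (∀ j : ℤ, c (j + 1) = c j + (f j).length) ∧
  ∀ (j : ℤ) (m : Fin (f j).length), x (c j + (m : ℕ)) = (f j).get m

/-- The subshift `X_{u,v}` of all sequences built from `{u, v}`. -/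
def Xuv (u v : List A) : Set (ℤ → A) :=
  {x | ∃ (c : ℤ → ℤ) (f : ℤ → List A), IsBuildingSeq {u, v} x c f}

/-! ### Block-code conjugacies -/

/-- A conjugacy `φ : X → Y` admitting block width `2n+1`. -/
structure BlockConjugacy (A : Type*) (X Y : Set (ℤ → A)) (n : ℕ) where
  toFun : (ℤ → A) → (ℤ → A)
  invFun : (ℤ → A) → (ℤ → A)
  maps_to : ∀ x ∈ X, toFun x ∈ Y
  maps_from : ∀ y ∈ Y, invFun y ∈ X
  left_inv : ∀ x ∈ X, invFun (toFun x) = x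
  right_inv : ∀ y ∈ Y, toFun (invFun y) = y
  shift_comm : ∀ x ∈ X, toFun (shift x) = shift (toFun x)
  code : List A → A
  code_inv : List A → A
  code_spec : ∀ x ∈ X, ∀ i : ℤ, toFun x i = code (factorAt x (i - n) (2*n+1))
  code_inv_spec : ∀ y ∈ Y, ∀ i : ℤ, invFun y i = code_inv (factorAt y (i - n) (2*n+1))

/-! ### Parts, permutation action, χ -/

/-- `W` is a member of `Parts(X, p)`: a class of the common-`p`-skeleton relation. -/
def SkelClass (X : Set (ℤ → A)) (p : ℕ) (W : Set (ℤ → A)) : Prop :=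
  ∃ y ∈ X, W = {z ∈ X | Skel z p = Skel y p}

/-- The map `ψ̂` induced by a permutation `ψ` of `A^p`. -/
def permHat (p : ℕ) (ψ : Equiv.Perm (Fin p → A)) (x : ℤ → A) : ℤ → A :=
  fun i =>
    if h : (i.emod p).toNat < p then
      ψ (fun m : Fin p => x (i - i.emod p + (m : ℕ))) ⟨(i.emod p).toNat, h⟩
    else x i

/-- The relation `E_p` on compact subsets of `A^ℤ`. -/
def EpRel (p : ℕ) (K L : Set (ℤ → A)) : Prop :=
  ∃ ψ : Equiv.Perm (Fin p → A), L = permHat p ψ '' K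

/-- `W ∈ Parts_*(X, p)`. -/
def SkelClassStar (X : Set (ℤ → A)) (p : ℕ) (W : Set (ℤ → A)) : Prop :=
  SkelClass X p W ∧ ∀ y ∈ W, Skel y p (-1) = none ∧ Skel y p 0 ≠ none

/-- `length(W) = L` for `W ∈ Parts_*(X, p)`. -/
def HasLength (p : ℕ) (W : Set (ℤ → A)) (L : ℕ) : Prop :=
  ∀ y ∈ W, (∀ i : ℕ, i < L → Skel y p (i : ℤ) ≠ none) ∧ Skel y p (L : ℤ) = none

/-- `Z ∈ χ(X, p)`. -/
def ChiMem (X : Set (ℤ → A)) (p : ℕ) (Z : Set (ℤ → A)) : Prop :=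
  ∃ (W : Set (ℤ → A)) (L : ℕ), SkelClassStar X p W ∧ HasLength p W L ∧
    (∀ (W' : Set (ℤ → A)) (L' : ℕ),
      SkelClassStar X p W' → HasLength p W' L' → L' ≤ L) ∧
    Z = shiftBy ((L / 2 : ℕ) : ℤ) '' W

/-- `χ(X, p) E_p^fin χ(Y, p)`. -/
def ChiEpFin (X Y : Set (ℤ → A)) (p : ℕ) : Prop :=
  (∀ K, ChiMem X p K → ∃ L, ChiMem Y p L ∧ EpRel p K L) ∧
  (∀ L, ChiMem Y p L → ∃ K, ChiMem X p K ∧ EpRel p K L)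

/-! ### Single holes and fillings -/

/-- The Toeplitz sequence `x` has single holes with respect to the period structure `P`. -/
def SingleHoles (x : ℤ → A) (P : ℕ → ℕ) : Prop :=
  IsPeriodStructure x P ∧
  ∀ n, ∃! i : ℤ, 0 ≤ i ∧ i < (P n : ℤ) ∧ i ∉ PerSet x (P n)

/-- The Toeplitz subshift `X` has single holes. -/
def HasSingleHoles [TopologicalSpace A] (X : Set (ℤ → A)) : Prop :=
  ∃ (x : ℤ → A) (P : ℕ → ℕ), ToeplitzGenerates x X ∧ SingleHoles x P

/-- `w` is the `(n, m)`-filling of `x` (for periods `pn < pm`). -/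
def IsFilling (x : ℤ → A) (pn pm : ℕ) (w : List A) : Prop :=
  w.length = pm / pn - 1 ∧
  ∀ h : ℤ, 0 ≤ h → h < (pm : ℤ) → h ∉ PerSet x pm →
    ∀ (j : ℕ) (hj : j < w.length), w.get ⟨j, hj⟩ = x (h + (j+1) * pn)

/-- `u` is a `θ`-palindrome. -/
def ThetaPalindrome (θ : Equiv.Perm A) (u : List A) : Prop :=
  u.map (fun a => θ a) = u.reverse

/-! ### Nice symmetries -/

/-- `x` has nice symmetries with respect to `(p, q)`. -/
def NiceSymmetries (x : ℤ → A) (p q : ℕ) : Prop :=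
  ∃ m : ℤ, 1 < m ∧ m ≤ (q : ℤ) + 1 ∧
    (∀ k : ℕ, k < q / p →
      (Set.Ico ((k * p : ℕ) : ℤ) (((k+1) * p : ℕ) : ℤ) ⊆ PerSet x q ↔
       Set.Ico (m - ((k+1) * p : ℕ)) (m - (k * p : ℕ)) ⊆ PerSet x q)) ∧
    (∀ k k' : ℕ, k < q / p → k' < q / p →
      Set.Ico ((k * p : ℕ) : ℤ) (((k+1) * p : ℕ) : ℤ) ⊆ PerSet x q →
      Set.Ico ((k' * p : ℕ) : ℤ) (((k'+1) * p : ℕ) : ℤ) ⊆ PerSet x q →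
      (factorAt x ((k * p : ℕ) : ℤ) p = factorAt x ((k' * p : ℕ) : ℤ) p ↔
       factorAt x (m - ((k+1) * p : ℕ)) p = factorAt x (m - ((k'+1) * p : ℕ)) p))

/-- For some `p` dividing the scale of `X`, `x` has nice symmetries with respect to
`(p, q)` for all `q > p` with `p ∣ q` dividing the scale of `X`. -/
def NiceSymAll [TopologicalSpace A] (X : Set (ℤ → A)) (x : ℤ → A) : Prop :=
  ∃ p : ℕ, 0 < p ∧ DividesScale X p ∧
    ∀ q : ℕ, p < q → p ∣ q → DividesScale X q → NiceSymmetries x p q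

/-- A pair `(x, x')` is a centered left asymptotic pair. -/
def CenteredLeftAsymptoticPair (x x' : ℤ → A) : Prop :=
  (∀ i : ℤ, i < 0 → x i = x' i) ∧ x 0 ≠ x' 0

/-! ### Automorphism groups -/

/-- `e` is an automorphism of the subshift `(X, S)`. -/
def IsShiftAutomorphism [TopologicalSpace A] (X : Set (ℤ → A)) (e : ↥X ≃ₜ ↥X) : Prop :=
  ∀ (x : ℤ → A) (hx : x ∈ X) (hx' : shift x ∈ X),
    (e ⟨shift x, hx'⟩).1 = shift (e ⟨x, hx⟩).1

/-- The automorphism group of `(X, S)` is isomorphic, as a group, to `ℤ × ℤ/nℤ`. -/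
def AutGroupIsoZxZmod [TopologicalSpace A] (X : Set (ℤ → A)) (n : ℕ) : Prop :=
  ∃ Φ : {e : ↥X ≃ₜ ↥X // IsShiftAutomorphism X e} → ℤ × ZMod n,
    Function.Bijective Φ ∧
    ∀ e f g : {e : ↥X ≃ₜ ↥X // IsShiftAutomorphism X e},
      (∀ z : ↥X, g.1 z = e.1 (f.1 z)) → Φ g = Φ e + Φ f

/-! ### The Polish space of subshifts over `ℤ` -/

/-- A point of the space `𝐒` of all (compact, nonempty, shift-invariant) subshifts
over finite alphabets contained in `ℤ`. -/
structure SubshiftSpace : Type where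
  carrier : Set (ℤ → ℤ)
  nonempty : carrier.Nonempty
  compact : IsCompact carrier
  invariant : shift '' carrier = carrier

/-- The topology on `𝐒` induced by the languages `(L_n(X))_{n}`, with each
family of `n`-languages discrete; this coincides with the metric
`d(X,Y) = 2^{-min{n : L_n(X) ≠ L_n(Y)}}`. -/
instance : TopologicalSpace SubshiftSpace :=
  TopologicalSpace.induced
    (fun X : SubshiftSpace => (fun n => Lang n X.carrier : ℕ → Set (List ℤ)))
    (@Pi.topologicalSpace ℕ (fun _ => Set (List ℤ)) (fun _ => ⊥))

/-- The subset `𝐌 ⊆ 𝐒` of infinite minimal subshifts. -/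
def MinimalSet : Set SubshiftSpace :=
  {X | X.carrier.Infinite ∧ ∀ x ∈ X.carrier, X.carrier ⊆ closure (orbit x)}



/-! #### Auxiliary lemmas for Statement 3 -/

section Statement3Aux

lemma coelist (n : ℕ) :
    ((List.range n).flatMap fun a => [(a:ℤ)]) = (List.range n).map (Nat.cast) := by
  induction n with
  | zero => rfl
  | succ n ih => rw [List.range_succ]; simp [ih]; exact List.flatMap_pure_eq_map _ _

lemma factorAt_eq {B : Type*} (x : ℤ → B) (i : ℤ) (n : ℕ) :
    factorAt x i n = (List.range n).map (fun j : ℕ => x (i + (j:ℤ))) := by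
  show List.map _ (_ >>= _) = _
  rw [List.bind_eq_flatMap]
  induction (List.range n) <;> simp_all

lemma factorAt_length {B : Type*} (x : ℤ → B) (i : ℤ) (n : ℕ) :
    (factorAt x i n).length = n := by
  simp [factorAt_eq]

lemma factorAt_getElem {B : Type*} (x : ℤ → B) (i : ℤ) (n j : ℕ) (hj : j < n) :
    (factorAt x i n)[j]'(by simp [factorAt_length, hj]) = x (i + j) := by
  simp [factorAt_eq]

variable {𝒜 : ℕ → Type*} (τ : ∀ n, 𝒜 (n+1) → List (𝒜 n))

lemma word0_len_pos (hNE : NonErasing τ) : ∀ (k : ℕ) (a : 𝒜 k), 0 < (word0 τ k a).length := by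
  intro k
  induction k with
  | zero => intro a; simp [word0]
  | succ k ih =>
    intro a
    obtain ⟨c, rest, hc⟩ := List.exists_cons_of_ne_nil (hNE k a)
    show 0 < ((τ k a).flatMap (word0 τ k)).length
    rw [hc]
    simp only [List.flatMap_cons, List.length_append]
    have := ih c
    omega

lemma word0_len_eq (hNE : NonErasing τ) (hCL : ConstantLength τ) :
    ∀ (k : ℕ) (a b : 𝒜 k), (word0 τ k a).length = (word0 τ k b).length := by
  intro k
  induction k with
  | zero => intro a b; simp [word0]
  | succ k ih =>
    intro a b
    obtain ⟨c, rest, hc⟩ := List.exists_cons_of_ne_nil (hNE k a)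
    have key : ∀ d : 𝒜 (k+1), ((τ k d).flatMap (word0 τ k)).length
        = (τ k d).length * (word0 τ k c).length := by
      intro d
      rw [List.length_flatMap]
      show (List.map (List.length ∘ word0 τ k) (τ k d)).sum = _
      have : List.map (List.length ∘ word0 τ k) (τ k d)
          = List.map (fun _ => (word0 τ k c).length) (τ k d) := by
        apply List.map_congr_left
        intro b' _
        exact ih b' c
      rw [this, List.map_const', List.sum_replicate, smul_eq_mul]
    show ((τ k a).flatMap (word0 τ k)).length = ((τ k b).flatMap (word0 τ k)).length
    rw [key a, key b, hCL k a b]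

lemma word0_len_mono (hNE : NonErasing τ) (hCL : ConstantLength τ) :
    ∀ (k k' : ℕ), k ≤ k' → ∀ (a : 𝒜 k) (b : 𝒜 k'),
      (word0 τ k a).length ≤ (word0 τ k' b).length := by
  intro k k' h
  induction k' with
  | zero => intro a b; interval_cases k; simp [word0]
  | succ k' ih =>
    intro a b
    rcases Nat.lt_or_ge k (k'+1) with h' | h'
    · have hk : k ≤ k' := by omega
      obtain ⟨c, rest, hc⟩ := List.exists_cons_of_ne_nil (hNE k' b)
      have h1 : (word0 τ k a).length ≤ (word0 τ k' c).length := ih hk a c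
      have h2 : (word0 τ k' c).length ≤ (word0 τ (k'+1) b).length := by
        show _ ≤ ((τ k' b).flatMap (word0 τ k')).length
        rw [hc]
        simp only [List.flatMap_cons, List.length_append]
        omega
      exact le_trans h1 h2
    · have : k = k' + 1 := by omega
      subst this
      exact le_of_eq (word0_len_eq τ hNE hCL _ a b)

lemma sadic_zero : ∀ (k : ℕ) (a : 𝒜 (0+k)), sadicWordAux τ 0 k a = word0 τ (0+k) a := by
  intro k
  induction k with
  | zero => intro a; rfl
  | succ k ih =>
    intro a
    show (τ (0+k) a).flatMap (sadicWordAux τ 0 k) = (τ (0+k) a).flatMap (word0 τ (0+k))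
    rw [show sadicWordAux τ 0 k = word0 τ (0+k) from funext ih]

lemma word0_decomp (m : ℕ) : ∀ (k : ℕ), m ≤ k → ∀ a : 𝒜 k,
    ∃ l : List (𝒜 m), word0 τ k a = l.flatMap (word0 τ m) := by
  intro k
  induction k with
  | zero =>
    intro h a
    have : m = 0 := by omega
    subst this
    exact ⟨[a], by simp⟩
  | succ k ih =>
    intro h a
    rcases Nat.lt_or_ge m (k+1) with h' | h'
    · have hk : m ≤ k := by omega
      have hch : ∀ b : 𝒜 k, ∃ l : List (𝒜 m), word0 τ k b = l.flatMap (word0 τ m) :=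
        fun b => ih hk b
      choose L hL using hch
      refine ⟨(τ k a).flatMap L, ?_⟩
      show (τ k a).flatMap (word0 τ k) = _
      rw [List.flatMap_assoc]
      exact List.flatMap_congr fun b _ => hL b
    · have : m = k + 1 := by omega
      subst this
      exact ⟨[a], by simp⟩

lemma flatMap_length_const {B C : Type*} (g : B → List C) (p : ℕ)
    (hg : ∀ b, (g b).length = p) : ∀ l : List B, (l.flatMap g).length = l.length * p := by
  intro l
  induction l with
  | nil => simp
  | cons b l ih => simp [List.flatMap_cons, ih, hg b, Nat.succ_mul, Nat.add_comm]

lemma flatMap_block {B C : Type*} (g : B → List C) (p : ℕ)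
    (hg : ∀ b, (g b).length = p) :
    ∀ (l : List B) (q : ℕ) (hq : q < l.length),
      ((l.flatMap g).drop (q*p)).take p = g (l[q]) := by
  intro l
  induction l with
  | nil => intro q hq; simp at hq
  | cons b l ih =>
    intro q hq
    cases q with
    | zero =>
      simp only [List.flatMap_cons, Nat.zero_mul, List.drop_zero]
      rw [List.take_append_of_le_length (le_of_eq (hg b).symm),
        List.take_of_length_le (le_of_eq (hg b))]
      rfl
    | succ q =>
      simp only [List.flatMap_cons]
      rw [show (q+1)*p = (g b).length + q*p by rw [hg b]; ring, List.drop_length_add_append]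
      exact ih q (by simpa using hq)

lemma factorAt_drop_take {B : Type*} (x : ℤ → B) (i : ℤ) (M d p : ℕ) (h : d + p ≤ M) :
    ((factorAt x i M).drop d).take p = factorAt x (i + d) p := by
  apply List.ext_getElem
  · simp [factorAt_length]; omega
  · intro j h1 h2
    have hj : j < p := by simpa [factorAt_length] using h2
    rw [List.getElem_take, List.getElem_drop]
    rw [factorAt_getElem x i M (d+j) (by omega), factorAt_getElem x (i+d) p j hj]
    congr 1
    push_cast
    ring

lemma exists_cut (hNE : NonErasing τ) (hCL : ConstantLength τ)
    (n : ℕ) (a₀ : 𝒜 (n+1)) (x : ℤ → 𝒜 0) (hx : x ∈ XLevel τ 0) :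
    ∃ t : ℕ, t < (word0 τ (n+1) a₀).length ∧ ∀ k : ℤ, ∃ a : 𝒜 (n+1),
      factorAt x ((t:ℤ) + k * ((word0 τ (n+1) a₀).length : ℤ))
        ((word0 τ (n+1) a₀).length) = word0 τ (n+1) a := by
  set p := (word0 τ (n+1) a₀).length with hpdef
  have hp : 0 < p := word0_len_pos τ hNE _ a₀
  have hplen : ∀ a : 𝒜 (n+1), (word0 τ (n+1) a).length = p :=
    fun a => word0_len_eq τ hNE hCL _ a a₀
  have key : ∀ m : ℕ, ∃ t : ℕ, t < p ∧ ∀ kk : ℤ, -(m:ℤ) ≤ kk → kk < m →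
      ∃ a : 𝒜 (n+1), factorAt x ((t:ℤ) + kk * p) p = word0 τ (n+1) a := by
    intro m
    obtain ⟨K, hK, a, hinf⟩ := hx (-(((m+1)*p : ℕ) : ℤ)) ((2*m+3)*p)
    rw [sadic_zero τ K a] at hinf
    have hMle := hinf.length_le
    rw [factorAt_length] at hMle
    have hk' : n+1 ≤ 0+K := by
      by_contra hcon
      push_neg at hcon
      have hmono : (word0 τ (0+K) a).length ≤ p :=
        word0_len_mono τ hNE hCL _ _ (by omega) a a₀
      have hlt : 1*p < (2*m+3)*p := (Nat.mul_lt_mul_right hp).mpr (by omega)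
      omega
    obtain ⟨l, hl⟩ := word0_decomp τ (n+1) (0+K) hk' a
    obtain ⟨s, t', hbig⟩ := hinf
    set σ := s.length with hσ
    set d₀ := (p - σ % p) % p with hd₀def
    have hd₀ : d₀ < p := Nat.mod_lt _ hp
    obtain ⟨q₀, hq₀⟩ : ∃ q₀, σ + d₀ = q₀ * p := by
      rcases Nat.eq_zero_or_pos (σ % p) with h0 | h0
      · refine ⟨σ / p, ?_⟩
        have h3 := Nat.div_add_mod σ p
        have h4 : d₀ = 0 := by rw [hd₀def, h0, Nat.sub_zero, Nat.mod_self]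
        have h5 : σ / p * p = p * (σ / p) := Nat.mul_comm _ _
        omega
      · refine ⟨σ / p + 1, ?_⟩
        have h1 : σ % p < p := Nat.mod_lt _ hp
        have h2 : d₀ = p - σ % p := by rw [hd₀def]; exact Nat.mod_eq_of_lt (by omega)
        have h3 := Nat.div_add_mod σ p
        have h4 : (σ / p + 1) * p = p * (σ / p) + p := by ring
        omega
    have hbiglen : (word0 τ (0+K) a).length = l.length * p := by
      rw [hl]; exact flatMap_length_const _ p hplen l
    have hlenbig : σ + ((2*m+3)*p + t'.length) = l.length * p := by
      have hc := congrArg List.length hbig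
      simp only [List.length_append, factorAt_length, hbiglen] at hc
      omega
    refine ⟨d₀, hd₀, ?_⟩
    intro kk hkk1 hkk2
    set j : ℕ := (kk + (m+1)).toNat with hjdef
    have hjA : (j:ℤ) = kk + (m+1) := by omega
    have hjlt : j < 2*m+2 := by omega
    have hdb : d₀ + j*p + p ≤ (2*m+3)*p := by
      have h1 : j*p ≤ (2*m+1)*p := Nat.mul_le_mul_right p (by omega)
      have h2 : (2*m+3)*p = p + (2*m+1)*p + p := by ring
      omega
    have hql : q₀ + j < l.length := by
      have h1 : (q₀ + j + 1) * p ≤ l.length * p := by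
        have e1 : (q₀ + j + 1) * p = q₀*p + (j*p + p) := by ring
        omega
      have := Nat.le_of_mul_le_mul_right h1 hp
      omega
    have hblock : ((word0 τ (0+K) a).drop ((q₀+j)*p)).take p
        = word0 τ (n+1) (l[q₀+j]'hql) := by
      rw [hl]; exact flatMap_block _ p hplen l _ hql
    have hfac : ((factorAt x (-(((m+1)*p:ℕ):ℤ)) ((2*m+3)*p)).drop (d₀ + j*p)).take p
        = word0 τ (n+1) (l[q₀+j]'hql) := by
      rw [← hblock, ← hbig]
      have e2 : (q₀+j)*p = s.length + (d₀ + j*p) := by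
        have e3 : (q₀+j)*p = q₀*p + j*p := by ring
        omega
      rw [e2, List.append_assoc, List.drop_length_add_append]
      rw [List.drop_append_of_le_length (by rw [factorAt_length]; omega)]
      rw [List.take_append_of_le_length (by rw [List.length_drop, factorAt_length]; omega)]
    rw [factorAt_drop_take x _ _ _ p (by omega)] at hfac
    refine ⟨l[q₀+j]'hql, ?_⟩
    rw [← hfac]
    congr 1
    push_cast
    rw [hjA]
    ring
  choose g hg1 hg2 using key
  let G : ℕ → Fin p := fun m => ⟨g m, hg1 m⟩
  obtain ⟨t, ht⟩ := Finite.exists_infinite_fiber G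
  have ht' : (G ⁻¹' {t}).Infinite := Set.infinite_coe_iff.mp ht
  refine ⟨t.1, t.2, ?_⟩
  intro k
  obtain ⟨m, hm, hmk⟩ := ht'.exists_gt k.natAbs
  have hgm : g m = t.1 := congrArg Fin.val (by simpa using hm)
  obtain ⟨a, ha⟩ := hg2 m k (by omega) (by omega)
  exact ⟨a, by rw [← hgm]; exact ha⟩

lemma two_elem {α : Type*} [Fintype α] (h2 : Fintype.card α = 2) (b c : α)
    (hbc : b ≠ c) (a : α) : a = b ∨ a = c := by
  classical
  by_contra h
  push_neg at h
  have hle : ({a, b, c} : Finset α).card ≤ 2 := h2 ▸ Finset.card_le_univ _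
  rw [Finset.card_insert_of_notMem (by simp [h.1, h.2]),
    Finset.card_insert_of_notMem (by simp [hbc])] at hle
  simp at hle

lemma periodic_of_const {B : Type*} (x : ℤ → B) (p t : ℕ) (hp : 0 < p) (u : List B)
    (h : ∀ k : ℤ, factorAt x ((t:ℤ) + k * p) p = u) : ∀ i : ℤ, x (i + p) = x i := by
  intro i
  set k := (i - t) / (p:ℤ) with hk
  set r := (i - t) % (p:ℤ) with hr
  have hpz : (p:ℤ) ≠ 0 := by exact_mod_cast hp.ne'
  have hr0 : 0 ≤ r := Int.emod_nonneg _ hpz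
  have hrp : r < p := Int.emod_lt_of_pos _ (by exact_mod_cast hp)
  have hdm : (p:ℤ) * k + r = i - t := Int.mul_ediv_add_emod (i - t) p
  have hrn : ((r.toNat : ℤ)) = r := Int.toNat_of_nonneg hr0
  have hlt : r.toNat < p := by omega
  have hu : u.length = p := by rw [← h 0, factorAt_length]
  have hb : r.toNat < u.length := by omega
  have g1 : x ((t:ℤ) + k*p + r.toNat) = u[r.toNat]'hb := by
    rw [← factorAt_getElem x ((t:ℤ)+k*p) p r.toNat hlt]
    exact List.getElem_of_eq (h k) _
  have g2 : x ((t:ℤ) + (k+1)*p + r.toNat) = u[r.toNat]'hb := by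
    rw [← factorAt_getElem x ((t:ℤ)+(k+1)*p) p r.toNat hlt]
    exact List.getElem_of_eq (h (k+1)) _
  have hmc : k * (p:ℤ) = (p:ℤ) * k := mul_comm _ _
  have pos1 : (t:ℤ) + k*p + r.toNat = i := by rw [hrn]; linarith
  have pos2 : (t:ℤ) + (k+1)*p + r.toNat = i + p := by
    rw [hrn]
    have : (k+1) * (p:ℤ) = (p:ℤ)*k + p := by ring
    linarith
  rw [← pos2, ← pos1, g2, g1]

end Statement3Aux

/-- For a constant-length directive sequence on 2-letter alphabets whose
S-adic subshift is aperiodic, with `p_n = |τ_{[0,n+1)}(a)|`, every `x ∈ X_τ` admits for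
each `n` a strong rank-2 cut `(p_n, t)` whose cut words are exactly the words
`τ_{[0,n+1)}(a)`, `a ∈ A (n+1)`. -/
theorem statement3 (A : ℕ → Type) [∀ n, Fintype (A n)]
    (τ : ∀ n, A (n+1) → List (A n))
    (hNE : NonErasing τ) (hCL : ConstantLength τ)
    (hcard : ∀ n, Fintype.card (A (n+1)) = 2)
    (hap : ∀ x ∈ XLevel τ 0, IsAperiodicPoint x) :
    ∀ x ∈ XLevel τ 0, ∀ (n : ℕ) (a₀ : A (n+1)),
      ∃ t : ℕ, StrongRank2Cut x (word0 τ (n+1) a₀).length t ∧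
        cutWords x (word0 τ (n+1) a₀).length t
          = {w | ∃ a : A (n+1), w = word0 τ (n+1) a} := by
  intro x hx n a₀
  set p := (word0 τ (n+1) a₀).length with hpdef
  have hp : 0 < p := word0_len_pos τ hNE _ a₀
  obtain ⟨t, htp, hW⟩ := exists_cut τ hNE hCL n a₀ x hx
  set F : ℤ → List (A 0) := fun k => factorAt x ((t:ℤ) + k * p) p with hF
  have hne : ∃ k1 : ℤ, F k1 ≠ F 0 := by
    by_contra hcon
    push_neg at hcon
    exact hap x hx ⟨p, hp, periodic_of_const x p t hp (F 0) hcon⟩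
  obtain ⟨k1, hk1⟩ := hne
  obtain ⟨a1, ha1⟩ := hW 0
  obtain ⟨a2, ha2⟩ := hW k1
  have ha1' : F 0 = word0 τ (n+1) a1 := ha1
  have ha2' : F k1 = word0 τ (n+1) a2 := ha2
  have ha12 : a1 ≠ a2 := by
    intro h
    exact hk1 (by rw [ha2', ← h, ← ha1'])
  have hWset : {w : List (A 0) | ∃ a : A (n+1), w = word0 τ (n+1) a} = {F 0, F k1} := by
    ext w
    constructor
    · rintro ⟨a, rfl⟩
      rcases two_elem (hcard n) a1 a2 ha12 a with h | h
      · exact Set.mem_insert_iff.mpr (Or.inl (by rw [h, ← ha1']))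
      · exact Set.mem_insert_iff.mpr (Or.inr (Set.mem_singleton_iff.mpr (by rw [h, ← ha2'])))
    · rintro (rfl | rfl)
      exacts [⟨a1, ha1'⟩, ⟨a2, ha2'⟩]
  have hcuteq : cutWords x p t = {F 0, F k1} := by
    apply Set.Subset.antisymm
    · rintro w ⟨k, rfl⟩
      obtain ⟨a, ha⟩ := hW k
      have hmem : factorAt x ((t:ℤ) + k * p) p
          ∈ {w : List (A 0) | ∃ a : A (n+1), w = word0 τ (n+1) a} := ⟨a, ha⟩
      rw [hWset] at hmem
      exact hmem
    · rintro w (rfl | rfl)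
      exacts [⟨0, rfl⟩, ⟨k1, rfl⟩]
  exact ⟨t, ⟨htp, F 0, F k1, fun h => hk1 h.symm, hcuteq⟩, by rw [hcuteq, hWset]⟩

end ToeplitzFR
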